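/- Let 𝓗 be a real Hilbert space, φ : 𝓗 → ℝ a continuously differentiable functional whose gradient ∇φ : 𝓗 → 𝓗 is completely continuous, and let Ω ⊂ 𝓗 be a bounded open set such that x - ∇φ(x) ≠ 0 for all x ∈ ∂Ω. Let (Pₙ) be a sequence of orthogonal projections on 𝓗 such that each subspace 𝓗ₙ := Pₙ(𝓗) is finite-dimensional, 𝓗ₙ ⊆ 𝓗ₙ₊₁ for all n, and Pₙ x → x as n → ∞ for every x ∈ 𝓗. Then there exists N ∈ ℕ such that for all n ≥ N and all x ∈ ∂Ω with x ∈ 𝓗ₙ, one has x - Pₙ ∇φ(x) ≠ 0. -/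

import Mathlib

/-- Galerkin approximations of an admissible gradient field remain admissible:
if `∇φ` is completely continuous and `x - ∇φ(x) ≠ 0` on `∂Ω` (`Ω` bounded open),
then for any approximation scheme `(Pₙ)` of orthogonal projections with
finite-dimensional increasing ranges converging strongly to the identity, for all
sufficiently large `n` one has `x - Pₙ∇φ(x) ≠ 0` for every `x ∈ ∂Ω ∩ 𝓗ₙ`. -/
theorem galerkin_admissible
    {𝓗 : Type*} [NormedAddCommGroup 𝓗] [InnerProductSpace ℝ 𝓗] [CompleteSpace 𝓗]
    (φ : 𝓗 → ℝ) (hφ : ContDiff ℝ 1 φ)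
    (hgc : Continuous (gradient φ))
    (hcc : ∀ s : Set 𝓗, Bornology.IsBounded s → IsCompact (closure (gradient φ '' s)))
    (Ω : Set 𝓗) (hΩo : IsOpen Ω) (hΩb : Bornology.IsBounded Ω)
    (hadm : ∀ x ∈ frontier Ω, x - gradient φ x ≠ 0)
    (P : ℕ → 𝓗 →L[ℝ] 𝓗)
    (hsa : ∀ (n : ℕ) (x y : 𝓗), inner ℝ (P n x) y = inner ℝ x (P n y))
    (hid : ∀ (n : ℕ) (x : 𝓗), P n (P n x) = P n x)
    (hfin : ∀ n : ℕ, FiniteDimensional ℝ (LinearMap.range (P n : 𝓗 →ₗ[ℝ] 𝓗)))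
    (hmono : ∀ n : ℕ, LinearMap.range (P n : 𝓗 →ₗ[ℝ] 𝓗) ≤ LinearMap.range (P (n + 1) : 𝓗 →ₗ[ℝ] 𝓗))
    (hconv : ∀ x : 𝓗, Filter.Tendsto (fun n => P n x) Filter.atTop (nhds x)) :
    ∃ N : ℕ, ∀ n ≥ N, ∀ x ∈ frontier Ω,
      x ∈ LinearMap.range (P n : 𝓗 →ₗ[ℝ] 𝓗) → x - P n (gradient φ x) ≠ 0 := by
  by_contra h
  push_neg at h
  choose n hn x hxfr hxmem hxeq using h
  -- Projections are 1-Lipschitz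
  have hP : ∀ (m : ℕ) (v : 𝓗), ‖P m v‖ ≤ ‖v‖ := by
    intro m v
    have h1 : (inner ℝ (P m v) (P m v) : ℝ) = inner ℝ v (P m v) := by
      rw [hsa m v (P m v), hid]
    have h2 : ‖P m v‖ ^ 2 = (inner ℝ v (P m v) : ℝ) := by
      rw [← h1, real_inner_self_eq_norm_sq]
    have h3 : (inner ℝ v (P m v) : ℝ) ≤ ‖v‖ * ‖P m v‖ := real_inner_le_norm v (P m v)
    rcases eq_or_lt_of_le (norm_nonneg (P m v)) with h0 | h0
    · rw [← h0]; exact norm_nonneg v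
    · have : ‖P m v‖ * ‖P m v‖ ≤ ‖v‖ * ‖P m v‖ := by nlinarith
      exact le_of_mul_le_mul_right this h0
  -- frontier is bounded
  have hfb : Bornology.IsBounded (frontier Ω) :=
    hΩb.closure.subset frontier_subset_closure
  have hK : IsCompact (closure (gradient φ '' frontier Ω)) := hcc _ hfb
  set u : ℕ → 𝓗 := fun N => gradient φ (x N) with hu_def
  have hu : ∀ N, u N ∈ closure (gradient φ '' frontier Ω) := fun N =>
    subset_closure ⟨x N, hxfr N, rfl⟩
  obtain ⟨y, _, ψ, hψ, hconv'⟩ := hK.tendsto_subseq hu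
  -- n ∘ ψ → ∞
  have htend : Filter.Tendsto (fun k => n (ψ k)) Filter.atTop Filter.atTop :=
    Filter.tendsto_atTop_atTop.mpr fun b =>
      ⟨b, fun a ha => le_trans (le_trans ha hψ.le_apply) (hn (ψ a))⟩
  -- x (ψ k) → y
  have hxrw : ∀ N, x N = P (n N) (u N) := fun N => sub_eq_zero.mp (hxeq N)
  have hbound : ∀ k, ‖x (ψ k) - y‖ ≤ ‖u (ψ k) - y‖ + ‖P (n (ψ k)) y - y‖ := by
    intro k
    calc ‖x (ψ k) - y‖
        = ‖(P (n (ψ k)) (u (ψ k)) - P (n (ψ k)) y) + (P (n (ψ k)) y - y)‖ := by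
          rw [hxrw (ψ k), sub_add_sub_cancel]
      _ ≤ ‖P (n (ψ k)) (u (ψ k)) - P (n (ψ k)) y‖ + ‖P (n (ψ k)) y - y‖ :=
          norm_add_le _ _
      _ ≤ ‖u (ψ k) - y‖ + ‖P (n (ψ k)) y - y‖ := by
          gcongr
          rw [← map_sub]
          exact hP _ _
  have h1 : Filter.Tendsto (fun k => ‖u (ψ k) - y‖) Filter.atTop (nhds 0) := by
    rw [← tendsto_iff_norm_sub_tendsto_zero]
    exact hconv'
  have h2 : Filter.Tendsto (fun k => ‖P (n (ψ k)) y - y‖) Filter.atTop (nhds 0) := by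
    rw [← tendsto_iff_norm_sub_tendsto_zero]
    exact (hconv y).comp htend
  have hxconv : Filter.Tendsto (fun k => x (ψ k)) Filter.atTop (nhds y) := by
    rw [tendsto_iff_norm_sub_tendsto_zero]
    have := h1.add h2
    rw [add_zero] at this
    exact squeeze_zero (fun k => norm_nonneg _) hbound this
  have hyfr : y ∈ frontier Ω :=
    isClosed_frontier.mem_of_tendsto hxconv
      (Filter.Eventually.of_forall fun k => hxfr (ψ k))
  have hgy : Filter.Tendsto (fun k => gradient φ (x (ψ k))) Filter.atTop
      (nhds (gradient φ y)) := ((hgc.tendsto y).comp hxconv)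
  have : gradient φ y = y := tendsto_nhds_unique hgy hconv'
  exact hadm y hyfr (by rw [this, sub_self])
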